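/- Let L be a finite-dimensional Lie algebra and M a maximal subalgebra of L. If M is a c-ideal of L (i.e., there exists an ideal C of L with L = M + C and M ∩ C ⊆ M_L, where M_L is the core of M), then there exists an ideal C of L such that L = M + C, M ∩ C is an ideal of L, and C/(M ∩ C) is a chief factor of L (i.e., there is no ideal K of L with M ∩ C ⊊ K ⊊ C). -/

import Mathlib

/-- `M` is a maximal (proper) subalgebra of `L`. -/
def IsMaximalSubalgebra {F : Type*} [Field F] {L : Type*} [LieRing L] [LieAlgebra F L]
    (M : LieSubalgebra F L) : Prop :=
  M ≠ ⊤ ∧ ∀ K : LieSubalgebra F L, M < K → K = ⊤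

/-- `C/D` is a chief factor of `L`: `D < C` are ideals of `L` and there is no ideal of `L`
strictly between them (equivalently, `C/D` is a minimal nonzero ideal of `L/D`). -/
def IsChiefFactor {F : Type*} [Field F] {L : Type*} [LieRing L] [LieAlgebra F L]
    (D C : LieIdeal F L) : Prop :=
  D < C ∧ ∀ K : LieIdeal F L, D ≤ K → K ≤ C → K = D ∨ K = C

/-- The subquotient `S/(S ∩ D)`, as a Lie algebra; when `D ⊆ S` this is `S/D`. -/
abbrev SubQuot {F : Type*} [Field F] {L : Type*} [LieRing L] [LieAlgebra F L]
    (S : LieSubalgebra F L) (D : LieIdeal F L) :=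
  S ⧸ LieIdeal.comap S.incl D

/-- The core `M_L` of a subalgebra `M`: the largest ideal of `L` contained in `M`. -/
def coreOf {F : Type*} [Field F] {L : Type*} [LieRing L] [LieAlgebra F L]
    (M : LieSubalgebra F L) : LieIdeal F L :=
  sSup {I : LieIdeal F L | (I : Set L) ⊆ M}

/-- If a maximal subalgebra `M` of a finite-dimensional Lie algebra `L` is a c-ideal
(there is an ideal `C` with `L = M + C` and `M ∩ C ⊆ M_L`), then there is an ideal `C`
with `L = M + C`, `M ∩ C` an ideal of `L`, and `C/(M ∩ C)` a chief factor of `L`. -/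
theorem cIdeal_gives_chief_complement {F : Type*} [Field F] {L : Type*} [LieRing L]
    [LieAlgebra F L] [FiniteDimensional F L] (M : LieSubalgebra F L)
    (hM : IsMaximalSubalgebra M)
    (h : ∃ C : LieIdeal F L, M.toSubmodule ⊔ C.toSubmodule = ⊤ ∧
      (M : Set L) ∩ (C : Set L) ⊆ (coreOf M : Set L)) :
    ∃ C : LieIdeal F L, M.toSubmodule ⊔ C.toSubmodule = ⊤ ∧
      ∃ I : LieIdeal F L, (I : Set L) = (M : Set L) ∩ (C : Set L) ∧ IsChiefFactor I C := by
  classical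
  obtain ⟨hMtop, hMmax⟩ := hM
  obtain ⟨C, hC, hCcore⟩ := h
  -- core ⊆ M
  have hcoreM : ((coreOf M : LieIdeal F L) : Set L) ⊆ (M : Set L) := by
    have : (coreOf M).toSubmodule ≤ M.toSubmodule := by
      rw [coreOf, LieSubmodule.sSup_toSubmodule]
      refine sSup_le ?_
      rintro p ⟨I, hI, rfl⟩
      exact fun x hx => hI hx
    exact this
  -- minimal ideal D ≤ C with M ⊔ D = ⊤
  have hex : ∃ n : ℕ, ∃ D : LieIdeal F L, (D ≤ C ∧ M.toSubmodule ⊔ D.toSubmodule = ⊤) ∧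
      Module.finrank F D.toSubmodule = n := ⟨_, C, ⟨le_rfl, hC⟩, rfl⟩
  obtain ⟨D, ⟨hDC, hDsup⟩, hDn⟩ := Nat.find_spec hex
  have hmin : ∀ D' : LieIdeal F L, D' ≤ C → M.toSubmodule ⊔ D'.toSubmodule = ⊤ →
      Module.finrank F D.toSubmodule ≤ Module.finrank F D'.toSubmodule := by
    intro D' h1 h2
    rw [hDn]
    exact Nat.find_le ⟨D', ⟨h1, h2⟩, rfl⟩
  refine ⟨D, hDsup, coreOf M ⊓ D, ?_, ?_, ?_⟩
  · -- set equality
    rw [LieSubmodule.coe_inf]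
    apply Set.eq_of_subset_of_subset
    · exact Set.inter_subset_inter_left _ hcoreM
    · intro x hx
      exact ⟨hCcore ⟨hx.1, hDC hx.2⟩, hx.2⟩
  · -- strict inequality
    refine lt_of_le_of_ne inf_le_right ?_
    intro hEq
    have hDM : (D : Set L) ⊆ (M : Set L) := by
      intro x hx
      rw [← hEq] at hx
      exact hcoreM hx.1
    have : M.toSubmodule ⊔ D.toSubmodule = M.toSubmodule := by
      rw [sup_eq_left]
      exact fun x hx => hDM hx
    rw [this] at hDsup
    exact hMtop ((LieSubalgebra.toSubmodule_eq_top M).mp hDsup)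
  · -- no intermediate ideal
    intro K hIK hKD
    -- N := M + K is a subalgebra
    let N : LieSubalgebra F L :=
      { toSubmodule := M.toSubmodule ⊔ K.toSubmodule
        lie_mem' := by
          intro x y hx hy
          obtain ⟨m, hm, k, hk, rfl⟩ := Submodule.mem_sup.mp hx
          obtain ⟨m', hm', k', hk', rfl⟩ := Submodule.mem_sup.mp hy
          have h1 : ⁅m, m'⁆ ∈ M.toSubmodule := M.lie_mem hm hm'
          have h2 : ⁅m, k'⁆ ∈ K.toSubmodule := K.lie_mem hk'
          have h3 : ⁅k, m' + k'⁆ ∈ K.toSubmodule := by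
            have h4 : ⁅m' + k', k⁆ ∈ K := K.lie_mem hk
            have h5 : -⁅m' + k', k⁆ ∈ K := neg_mem h4
            rwa [lie_skew] at h5
          have : ⁅m + k, m' + k'⁆ = ⁅m, m'⁆ + (⁅m, k'⁆ + ⁅k, m' + k'⁆) := by
            simp only [add_lie, lie_add]; abel
          rw [this]
          exact Submodule.add_mem_sup h1 (add_mem h2 h3) }
    by_cases hN : N = ⊤
    · -- then K ∈ S, minimality gives K = D
      right
      have hsupK : M.toSubmodule ⊔ K.toSubmodule = ⊤ := by
        have := congrArg LieSubalgebra.toSubmodule hN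
        exact this.trans LieSubalgebra.top_toSubmodule
      have hle : K.toSubmodule ≤ D.toSubmodule := hKD
      have := Submodule.eq_of_le_of_finrank_le hle
        (hmin K (le_trans hKD hDC) hsupK)
      exact (LieSubmodule.toSubmodule_inj _ _).mp this
    · -- then M = N, so K ⊆ M, so K = I
      left
      have hMN : M ≤ N := by
        intro x hx
        exact Submodule.mem_sup_left hx
      have hMeqN : M = N := by
        by_contra hne
        exact hN (hMmax N (lt_of_le_of_ne hMN hne))
      have hKM : (K : Set L) ⊆ (M : Set L) := by
        intro x hx
        have : x ∈ N := Submodule.mem_sup_right hx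
        rw [← hMeqN] at this
        exact this
      have hKcore : K ≤ coreOf M := le_sSup hKM
      refine le_antisymm ?_ hIK
      exact le_inf hKcore hKD
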